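/- Fix reals a, b with a² + b² > 0, set Ω = √(a² + b²), and define the 3×3 real matrix function R(t) with entries: R_{11} = (a² cos(Ωt) + b²)/Ω², R_{12} = −a sin(Ωt)/Ω, R_{13} = 2 a b sin²(Ωt/2)/Ω², R_{21} = a sin(Ωt)/Ω, R_{22} = cos(Ωt), R_{23} = −b sin(Ωt)/Ω, R_{31} = 2 a b sin²(Ωt/2)/Ω², R_{32} = b sin(Ωt)/Ω, R_{33} = (a² + b² cos(Ωt))/Ω². Then R(0) = I and R solves the linear ODE dR/dt = G·R with G = [[0, −a, 0], [a, 0, −b], [0, b, 0]]. -/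

import Mathlib

open Matrix

attribute [local instance] Matrix.normedAddCommGroup Matrix.normedSpace

/-- The rotation-matrix solution of the two-magnet Bloch equations
(Appendix F.1), with `Ω = √(a² + b²)`. -/
noncomputable def Rsol (a b : ℝ) (t : ℝ) : Matrix (Fin 3) (Fin 3) ℝ :=
  !![(a ^ 2 * Real.cos (Real.sqrt (a ^ 2 + b ^ 2) * t) + b ^ 2) /
        Real.sqrt (a ^ 2 + b ^ 2) ^ 2,
      -(a * Real.sin (Real.sqrt (a ^ 2 + b ^ 2) * t)) / Real.sqrt (a ^ 2 + b ^ 2),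
      2 * a * b * Real.sin (Real.sqrt (a ^ 2 + b ^ 2) * t / 2) ^ 2 /
        Real.sqrt (a ^ 2 + b ^ 2) ^ 2;
    a * Real.sin (Real.sqrt (a ^ 2 + b ^ 2) * t) / Real.sqrt (a ^ 2 + b ^ 2),
      Real.cos (Real.sqrt (a ^ 2 + b ^ 2) * t),
      -(b * Real.sin (Real.sqrt (a ^ 2 + b ^ 2) * t)) / Real.sqrt (a ^ 2 + b ^ 2);
    2 * a * b * Real.sin (Real.sqrt (a ^ 2 + b ^ 2) * t / 2) ^ 2 /
        Real.sqrt (a ^ 2 + b ^ 2) ^ 2,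
      b * Real.sin (Real.sqrt (a ^ 2 + b ^ 2) * t) / Real.sqrt (a ^ 2 + b ^ 2),
      (a ^ 2 + b ^ 2 * Real.cos (Real.sqrt (a ^ 2 + b ^ 2) * t)) /
        Real.sqrt (a ^ 2 + b ^ 2) ^ 2]

/-- The generator `G` of the Bloch equations
`ẋ = -a y, ẏ = a x - b z, ż = b y`. -/
noncomputable def Gmat (a b : ℝ) : Matrix (Fin 3) (Fin 3) ℝ :=
  !![0, -a, 0; a, 0, -b; 0, b, 0]

/-- abstract version of `Rsol` with a free parameter `Ω`. -/
noncomputable def Mmat (a b Ω t : ℝ) : Matrix (Fin 3) (Fin 3) ℝ :=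
  !![(a ^ 2 * Real.cos (Ω * t) + b ^ 2) / Ω ^ 2,
      -(a * Real.sin (Ω * t)) / Ω,
      2 * a * b * Real.sin (Ω * t / 2) ^ 2 / Ω ^ 2;
    a * Real.sin (Ω * t) / Ω,
      Real.cos (Ω * t),
      -(b * Real.sin (Ω * t)) / Ω;
    2 * a * b * Real.sin (Ω * t / 2) ^ 2 / Ω ^ 2,
      b * Real.sin (Ω * t) / Ω,
      (a ^ 2 + b ^ 2 * Real.cos (Ω * t)) / Ω ^ 2]

lemma Rsol_eq_Mmat (a b : ℝ) : Rsol a b = Mmat a b (Real.sqrt (a ^ 2 + b ^ 2)) := rfl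

lemma hd_cos (c t : ℝ) : HasDerivAt (fun s => Real.cos (c * s)) (-(c * Real.sin (c * t))) t := by
  have h := (Real.hasDerivAt_cos (c * t)).comp t ((hasDerivAt_id t).const_mul c)
  simpa [mul_comm, Function.comp_def] using h

lemma hd_sin (c t : ℝ) : HasDerivAt (fun s => Real.sin (c * s)) (c * Real.cos (c * t)) t := by
  have h := (Real.hasDerivAt_sin (c * t)).comp t ((hasDerivAt_id t).const_mul c)
  simpa [mul_comm, Function.comp_def] using h

lemma hd_sinsq (c t : ℝ) :
    HasDerivAt (fun s => Real.sin (c * s / 2) ^ 2) (c / 2 * Real.sin (c * t)) t := by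
  have h1 : HasDerivAt (fun s : ℝ => c * s / 2) (c / 2) t := by
    simpa using ((hasDerivAt_id t).const_mul c).div_const 2
  have h2 := ((Real.hasDerivAt_sin (c * t / 2)).comp t h1).pow 2
  have hs : Real.sin (c * t) = 2 * Real.sin (c * t / 2) * Real.cos (c * t / 2) := by
    rw [← Real.sin_two_mul]; ring_nf
  convert h2 using 1
  · rfl
  · rfl
  · rfl
  simp only [Function.comp_apply, Function.comp]
  rw [hs]; ring

lemma Mmat_hasDerivAt (a b Ω : ℝ) (hΩ : Ω ^ 2 = a ^ 2 + b ^ 2) (hΩ0 : Ω ≠ 0) (t : ℝ) :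
    HasDerivAt (fun s => Mmat a b Ω s) (Gmat a b * Mmat a b Ω t) t := by
  refine hasDerivAt_pi.2 fun i => hasDerivAt_pi.2 fun j => ?_
  have h2 : 2 * (Ω * t / 2) = Ω * t := by ring
  fin_cases i <;> fin_cases j <;>
    simp [Mmat, Gmat, Matrix.mul_apply, Fin.sum_univ_three]
  · have h := (((hd_cos Ω t).const_mul (a ^ 2)).add_const (b ^ 2)).div_const (Ω ^ 2)
    convert h using 1
    · rfl
    field_simp
  · have h := (((hd_sin Ω t).const_mul a).neg).div_const Ω
    convert h using 1
    · rfl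
    · rfl
    field_simp
  · have h := ((hd_sinsq Ω t).const_mul (2 * a * b)).div_const (Ω ^ 2)
    convert h using 1
    · rfl
    field_simp
  · have h := ((hd_sin Ω t).const_mul a).div_const Ω
    convert h using 1
    · rfl
    rw [Real.sin_sq_eq_half_sub, h2]
    field_simp
    linear_combination (-(a * Real.cos (Ω * t))) * hΩ
  · have h := hd_cos Ω t
    convert h using 1
    · rfl
    · rfl
    field_simp
    linear_combination (Real.sin (Ω * t)) * hΩ
  · have h := (((hd_sin Ω t).const_mul b).neg).div_const Ω
    convert h using 1
    · rfl
    · rfl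
    rw [Real.sin_sq_eq_half_sub, h2]
    field_simp
    linear_combination (b * Real.cos (Ω * t)) * hΩ
  · have h := ((hd_sinsq Ω t).const_mul (2 * a * b)).div_const (Ω ^ 2)
    convert h using 1
    · rfl
    field_simp
  · have h := ((hd_sin Ω t).const_mul b).div_const Ω
    convert h using 1
    · rfl
    field_simp
  · have h := (((hd_cos Ω t).const_mul (b ^ 2)).const_add (a ^ 2)).div_const (Ω ^ 2)
    convert h using 1
    · rfl
    field_simp

lemma Mmat_zero (a b Ω : ℝ) (hΩ : Ω ^ 2 = a ^ 2 + b ^ 2) (hΩ0 : Ω ≠ 0) :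
    Mmat a b Ω 0 = 1 := by
  have hab : a ^ 2 + b ^ 2 ≠ 0 := by rw [← hΩ]; exact pow_ne_zero 2 hΩ0
  rw [Matrix.one_fin_three]
  ext i j
  fin_cases i <;> fin_cases j <;>
    simp [Mmat, hΩ, div_self hab]


/-- Appendix F.1 of the paper: the explicit rotation family `R(t)` satisfies
`R(0) = 1` and solves `dR/dt = G · R`. -/
theorem stmt_17 (a b : ℝ) (hab : 0 < a ^ 2 + b ^ 2) :
    Rsol a b 0 = 1 ∧
    ∀ t : ℝ, HasDerivAt (Rsol a b) (Gmat a b * Rsol a b t) t := by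

  have hΩ : Real.sqrt (a ^ 2 + b ^ 2) ^ 2 = a ^ 2 + b ^ 2 := Real.sq_sqrt hab.le
  have hΩ0 : Real.sqrt (a ^ 2 + b ^ 2) ≠ 0 := by positivity
  rw [Rsol_eq_Mmat]
  exact ⟨Mmat_zero a b _ hΩ hΩ0, fun t => Mmat_hasDerivAt a b _ hΩ hΩ0 t⟩
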